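/- Let n ≥ 2, let 1 ≤ i ≤ n−1, let a be an integer, and set α = a·x_i. Then R(α) = ℤ[x₁,…,x_{n−1}, y]/⟨x₁²,…,x_{n−1}², y² − αy⟩ is isomorphic as a graded ring to ℤ[z₁,…,z_n]/⟨z₁²,…,z_n²⟩ if and only if a is even. -/

import Mathlib

open MvPolynomial

/-- The defining ideal `⟨z₁²,…,z_n²⟩` of the cohomology ring of `(ℂP¹)^n`. -/
noncomputable def sqIdeal (m : ℕ) : Ideal (MvPolynomial (Fin m) ℤ) :=
  Ideal.span (Set.range fun i : Fin m => (X i) ^ 2)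

/-- The defining ideal `⟨x₁²,…,x_m², y² - αy⟩` of the cohomology ring `R(α)` of the
one-twist Bott manifold `M(α)` over `(ℂP¹)^m`, where `α = ∑ a_i x_i`; the variable indexed
by `none` is `y`. -/
noncomputable def twistIdeal (m : ℕ) (a : Fin m → ℤ) :
    Ideal (MvPolynomial (Option (Fin m)) ℤ) :=
  Ideal.span
    ((Set.range fun i : Fin m => (X (some i) : MvPolynomial (Option (Fin m)) ℤ) ^ 2) ∪
      {X none ^ 2 - (∑ i : Fin m, C (a i) * X (some i)) * X none})



def A4 : Type := Bool × Bool × Bool × Bool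

namespace A4

def mk (a b c d : Bool) : A4 := (a, b, c, d)

instance : DecidableEq A4 := inferInstanceAs (DecidableEq (Bool × Bool × Bool × Bool))

instance : Zero A4 := ⟨mk false false false false⟩
instance : One A4 := ⟨mk true false false false⟩
instance : Add A4 := ⟨fun a b => (xor a.1 b.1, xor a.2.1 b.2.1, xor a.2.2.1 b.2.2.1, xor a.2.2.2 b.2.2.2)⟩
instance : Neg A4 := ⟨fun a => a⟩
instance : Mul A4 := ⟨fun a b =>
  (a.1 && b.1, xor (a.1 && b.2.1) (a.2.1 && b.1), xor (a.1 && b.2.2.1) (a.2.2.1 && b.1),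
   xor (xor (a.1 && b.2.2.2) (a.2.2.2 && b.1))
     (xor (xor (a.2.1 && b.2.2.1) (a.2.2.1 && b.2.1)) (a.2.2.1 && b.2.2.1)))⟩

private lemma addAssoc : ∀ a1 a2 a3 a4 b1 b2 b3 b4 c1 c2 c3 c4 : Bool,
    (mk a1 a2 a3 a4 + mk b1 b2 b3 b4) + mk c1 c2 c3 c4
      = mk a1 a2 a3 a4 + (mk b1 b2 b3 b4 + mk c1 c2 c3 c4) := by decide

private lemma mulAssoc : ∀ a1 a2 a3 a4 b1 b2 b3 b4 c1 c2 c3 c4 : Bool,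
    (mk a1 a2 a3 a4 * mk b1 b2 b3 b4) * mk c1 c2 c3 c4
      = mk a1 a2 a3 a4 * (mk b1 b2 b3 b4 * mk c1 c2 c3 c4) := by decide

private lemma leftDistrib : ∀ a1 a2 a3 a4 b1 b2 b3 b4 c1 c2 c3 c4 : Bool,
    mk a1 a2 a3 a4 * (mk b1 b2 b3 b4 + mk c1 c2 c3 c4)
      = mk a1 a2 a3 a4 * mk b1 b2 b3 b4 + mk a1 a2 a3 a4 * mk c1 c2 c3 c4 := by decide

private lemma addComm : ∀ a1 a2 a3 a4 b1 b2 b3 b4 : Bool,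
    mk a1 a2 a3 a4 + mk b1 b2 b3 b4 = mk b1 b2 b3 b4 + mk a1 a2 a3 a4 := by decide

private lemma mulComm : ∀ a1 a2 a3 a4 b1 b2 b3 b4 : Bool,
    mk a1 a2 a3 a4 * mk b1 b2 b3 b4 = mk b1 b2 b3 b4 * mk a1 a2 a3 a4 := by decide

private lemma rightDistrib : ∀ a1 a2 a3 a4 b1 b2 b3 b4 c1 c2 c3 c4 : Bool,
    (mk a1 a2 a3 a4 + mk b1 b2 b3 b4) * mk c1 c2 c3 c4
      = mk a1 a2 a3 a4 * mk c1 c2 c3 c4 + mk b1 b2 b3 b4 * mk c1 c2 c3 c4 := by decide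

private lemma addZero : ∀ a1 a2 a3 a4 : Bool, mk a1 a2 a3 a4 + 0 = mk a1 a2 a3 a4 := by decide
private lemma mulOne : ∀ a1 a2 a3 a4 : Bool, mk a1 a2 a3 a4 * 1 = mk a1 a2 a3 a4 := by decide
private lemma mulZero : ∀ a1 a2 a3 a4 : Bool, mk a1 a2 a3 a4 * 0 = 0 := by decide

private lemma zeroAdd : ∀ a1 a2 a3 a4 : Bool, (0 : A4) + mk a1 a2 a3 a4 = mk a1 a2 a3 a4 := by decide
private lemma negAdd : ∀ a1 a2 a3 a4 : Bool, -(mk a1 a2 a3 a4) + mk a1 a2 a3 a4 = 0 := by decide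
private lemma oneMul : ∀ a1 a2 a3 a4 : Bool, (1 : A4) * mk a1 a2 a3 a4 = mk a1 a2 a3 a4 := by decide
private lemma zeroMul : ∀ a1 a2 a3 a4 : Bool, (0 : A4) * mk a1 a2 a3 a4 = 0 := by decide

instance : CommRing A4 where
  add_assoc := fun ⟨a1,a2,a3,a4⟩ ⟨b1,b2,b3,b4⟩ ⟨c1,c2,c3,c4⟩ =>
    addAssoc a1 a2 a3 a4 b1 b2 b3 b4 c1 c2 c3 c4
  zero_add := fun ⟨a1,a2,a3,a4⟩ => zeroAdd a1 a2 a3 a4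
  add_zero := fun ⟨a1,a2,a3,a4⟩ => addZero a1 a2 a3 a4
  add_comm := fun ⟨a1,a2,a3,a4⟩ ⟨b1,b2,b3,b4⟩ => addComm a1 a2 a3 a4 b1 b2 b3 b4
  neg_add_cancel := fun ⟨a1,a2,a3,a4⟩ => negAdd a1 a2 a3 a4
  mul_assoc := fun ⟨a1,a2,a3,a4⟩ ⟨b1,b2,b3,b4⟩ ⟨c1,c2,c3,c4⟩ =>
    mulAssoc a1 a2 a3 a4 b1 b2 b3 b4 c1 c2 c3 c4
  one_mul := fun ⟨a1,a2,a3,a4⟩ => oneMul a1 a2 a3 a4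
  mul_one := fun ⟨a1,a2,a3,a4⟩ => mulOne a1 a2 a3 a4
  left_distrib := fun ⟨a1,a2,a3,a4⟩ ⟨b1,b2,b3,b4⟩ ⟨c1,c2,c3,c4⟩ =>
    leftDistrib a1 a2 a3 a4 b1 b2 b3 b4 c1 c2 c3 c4
  right_distrib := fun ⟨a1,a2,a3,a4⟩ ⟨b1,b2,b3,b4⟩ ⟨c1,c2,c3,c4⟩ =>
    rightDistrib a1 a2 a3 a4 b1 b2 b3 b4 c1 c2 c3 c4
  mul_comm := fun ⟨a1,a2,a3,a4⟩ ⟨b1,b2,b3,b4⟩ => mulComm a1 a2 a3 a4 b1 b2 b3 b4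
  zero_mul := fun ⟨a1,a2,a3,a4⟩ => zeroMul a1 a2 a3 a4
  mul_zero := fun ⟨a1,a2,a3,a4⟩ => mulZero a1 a2 a3 a4
  nsmul := nsmulRec
  zsmul := zsmulRec

def sEl : A4 := mk false true false false
def tEl : A4 := mk false false true false

lemma s_sq : sEl * sEl = 0 := by decide
lemma t_sq : tEl * tEl = sEl * tEl := by decide
lemma st_ne : sEl * tEl ≠ 0 := by decide
lemma two_eq_zero : (2 : A4) = 0 := by
  show (1 : A4) + 1 = 0
  exact addComm true false false false true false false false ▸ negAdd true false false false

end A4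

section Helpers

variable {m : ℕ}

lemma sum_ite_eq_C (i : Fin m) (a : ℤ) :
    (∑ j : Fin m, (C (if j = i then a else 0) : MvPolynomial (Option (Fin m)) ℤ) * X (some j))
      = C a * X (some i) := by
  rw [Finset.sum_eq_single i]
  · simp
  · intro j _ hj; simp [hj]
  · intro h; simp at h

/-- the span-of-squares ideal on `Option (Fin m)`. -/
noncomputable def sqOpt (m : ℕ) : Ideal (MvPolynomial (Option (Fin m)) ℤ) :=
  Ideal.span (Set.range fun k : Option (Fin m) => (X k : MvPolynomial (Option (Fin m)) ℤ) ^ 2)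

/-- The shift algebra hom sending `y ↦ y + c·x_i`. -/
noncomputable def shiftHom (i : Fin m) (c : ℤ) :
    MvPolynomial (Option (Fin m)) ℤ →ₐ[ℤ] MvPolynomial (Option (Fin m)) ℤ :=
  aeval (fun k => match k with
    | none => X none + C c * X (some i)
    | some j => X (some j))

@[simp] lemma shiftHom_X_some (i : Fin m) (c : ℤ) (j : Fin m) :
    shiftHom i c (X (some j)) = X (some j) := by simp [shiftHom]

@[simp] lemma shiftHom_X_none (i : Fin m) (c : ℤ) :
    shiftHom i c (X none) = X none + C c * X (some i) := by simp [shiftHom]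

/-- The shift algebra equiv. -/
noncomputable def shiftEquiv (i : Fin m) (c : ℤ) :
    MvPolynomial (Option (Fin m)) ℤ ≃ₐ[ℤ] MvPolynomial (Option (Fin m)) ℤ :=
  AlgEquiv.ofAlgHom (shiftHom i c) (shiftHom i (-c))
    (by apply MvPolynomial.algHom_ext; rintro (_ | j) <;> simp <;> ring)
    (by apply MvPolynomial.algHom_ext; rintro (_ | j) <;> simp <;> ring)

@[simp] lemma shiftEquiv_X_some (i : Fin m) (c : ℤ) (j : Fin m) :
    shiftEquiv i c (X (some j)) = X (some j) := by
  exact shiftHom_X_some i c j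

@[simp] lemma shiftEquiv_X_none (i : Fin m) (c : ℤ) :
    shiftEquiv i c (X none) = X none + C c * X (some i) := by
  exact shiftHom_X_none i c

@[simp] lemma shiftEquiv_C (i : Fin m) (b c : ℤ) :
    (shiftEquiv i b) (C c) = (C c : MvPolynomial (Option (Fin m)) ℤ) := by
  simpa using (shiftEquiv i b).commutes (c : ℤ)

lemma shiftEquiv_sum (i : Fin m) (b c : ℤ) :
    (shiftEquiv i b) (∑ j : Fin m, C (if j = i then c else 0) * X (some j))
      = C c * X (some i) := by
  rw [map_sum, Finset.sum_congr rfl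
    (fun j _ => by rw [map_mul, shiftEquiv_C, shiftEquiv_X_some]), sum_ite_eq_C]

lemma C_two_mul (b : ℤ) :
    (C (2 * b) : MvPolynomial (Option (Fin m)) ℤ) = 2 * C b := by
  rw [C_mul]
  norm_num

lemma C_two : (C 2 : MvPolynomial (Option (Fin m)) ℤ) = 2 := by norm_num

lemma map_twist_eq_sqOpt (i : Fin m) (b : ℤ) :
    (twistIdeal m (fun j => if j = i then 2 * b else 0)).map
        (shiftEquiv i b : MvPolynomial (Option (Fin m)) ℤ →+* MvPolynomial (Option (Fin m)) ℤ)
      = sqOpt m := by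
  apply le_antisymm
  · rw [Ideal.map_le_iff_le_comap, twistIdeal, Ideal.span_le]
    rintro x (⟨j, rfl⟩ | rfl)
    · refine Ideal.mem_comap.2 ?_
      simp only [RingHom.coe_coe, map_pow, shiftEquiv_X_some]
      exact Ideal.subset_span ⟨some j, rfl⟩
    · refine Ideal.mem_comap.2 ?_
      simp only [RingHom.coe_coe, map_sub, map_pow, map_mul, shiftEquiv_X_none,
        shiftEquiv_sum]
      rw [C_two]
      have : (X none + C b * X (some i)) ^ 2
            - 2 * C b * X (some i) * (X none + C b * X (some i))
          = X none ^ 2 - C b * C b * X (some i) ^ 2 := by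
        ring
      rw [this]
      exact sub_mem (Ideal.subset_span ⟨none, rfl⟩)
        (Ideal.mul_mem_left _ _ (Ideal.subset_span ⟨some i, rfl⟩))
  · rw [sqOpt, Ideal.span_le]
    rintro x ⟨k, rfl⟩
    match k with
    | some j =>
      show (X (some j) : MvPolynomial (Option (Fin m)) ℤ) ^ 2 ∈ _
      have : (X (some j) : MvPolynomial (Option (Fin m)) ℤ) ^ 2
          = (shiftEquiv i b) (X (some j) ^ 2) := by simp
      rw [this]
      exact Ideal.mem_map_of_mem _ (Ideal.subset_span (Or.inl ⟨j, rfl⟩))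
    | none =>
      show (X none : MvPolynomial (Option (Fin m)) ℤ) ^ 2 ∈ _
      have key : (X none : MvPolynomial (Option (Fin m)) ℤ) ^ 2
          = (shiftEquiv i b) ((X none ^ 2
              - (∑ j : Fin m, C (if j = i then 2 * b else 0) * X (some j)) * X none)
            + C b * C b * X (some i) ^ 2) := by
        rw [map_add, map_sub, map_pow, map_mul, map_mul, map_mul, map_pow, shiftEquiv_X_none,
          shiftEquiv_X_some, shiftEquiv_C, shiftEquiv_sum, C_two_mul]
        ring
      rw [key]
      refine Ideal.mem_map_of_mem _ (add_mem ?_ ?_)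
      · exact Ideal.subset_span (Or.inr rfl)
      · exact Ideal.mul_mem_left _ _ (Ideal.subset_span (Or.inl ⟨i, rfl⟩))


lemma map_sqOpt_eq {n : ℕ} (e : Option (Fin m) ≃ Fin n) :
    (sqOpt m).map
        (renameEquiv ℤ e : MvPolynomial (Option (Fin m)) ℤ →+* MvPolynomial (Fin n) ℤ)
      = sqIdeal n := by
  rw [sqOpt, sqIdeal, Ideal.map_span]
  congr 1
  rw [← Set.range_comp]
  have : ((renameEquiv ℤ e : MvPolynomial (Option (Fin m)) ℤ →+* MvPolynomial (Fin n) ℤ) ∘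
      fun k : Option (Fin m) => (X k : MvPolynomial (Option (Fin m)) ℤ) ^ 2)
      = (fun l : Fin n => (X l : MvPolynomial (Fin n) ℤ) ^ 2) ∘ e := by
    funext k
    simp [renameEquiv]
  rw [this, Function.Surjective.range_comp e.surjective]

lemma target_sq_two (n : ℕ) (w : MvPolynomial (Fin n) ℤ ⧸ sqIdeal n)
    (hw : w ∈ Submodule.span ℤ (Set.range fun k : Fin n =>
      Ideal.Quotient.mk (sqIdeal n) (X k))) :
    ∃ r, w ^ 2 = 2 * r := by
  induction hw using Submodule.span_induction with
  | mem x hx =>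
    obtain ⟨k, rfl⟩ := hx
    refine ⟨0, ?_⟩
    have h0 : (Ideal.Quotient.mk (sqIdeal n)) (X k ^ 2) = 0 :=
      Ideal.Quotient.eq_zero_iff_mem.2 (Ideal.subset_span ⟨k, rfl⟩)
    rw [← map_pow, h0]
    ring
  | zero => exact ⟨0, by ring⟩
  | add x y _ _ hx hy =>
    obtain ⟨r, hr⟩ := hx
    obtain ⟨s, hs⟩ := hy
    refine ⟨r + s + x * y, ?_⟩
    have : (x + y) ^ 2 = x ^ 2 + y ^ 2 + 2 * (x * y) := by ring
    rw [this, hr, hs]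
    ring
  | smul c x _ hx =>
    obtain ⟨r, hr⟩ := hx
    refine ⟨c ^ 2 • r, ?_⟩
    have : (c • x) ^ 2 = c ^ 2 • x ^ 2 := by
      rw [zsmul_eq_mul, zsmul_eq_mul]
      push_cast
      ring
    rw [this, hr, zsmul_eq_mul, zsmul_eq_mul]
    push_cast
    ring


/-- The evaluation of the source polynomial ring into the witness algebra `A4`. -/
noncomputable def evalA4 (i : Fin m) : MvPolynomial (Option (Fin m)) ℤ →+* A4 :=
  eval₂Hom (Int.castRingHom A4)
    (fun k => match k with
      | none => A4.tEl
      | some j => if j = i then A4.sEl else 0)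

@[simp] lemma evalA4_C (i : Fin m) (c : ℤ) : evalA4 i (C c) = (c : A4) := by
  simp [evalA4]

@[simp] lemma evalA4_X_none (i : Fin m) : evalA4 i (X none) = A4.tEl := by
  simp [evalA4]

@[simp] lemma evalA4_X_some (i : Fin m) (j : Fin m) :
    evalA4 i (X (some j)) = if j = i then A4.sEl else 0 := by
  simp [evalA4]

lemma backward_aux {n : ℕ} (i : Fin m) (a : ℤ) (hodd : Odd a)
    (ψ : (MvPolynomial (Option (Fin m)) ℤ ⧸ twistIdeal m fun j => if j = i then a else 0) ≃+*
      (MvPolynomial (Fin n) ℤ ⧸ sqIdeal n))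
    (hspan : Submodule.map ψ.toRingHom.toIntAlgHom.toLinearMap
        (Submodule.span ℤ (Set.range fun k : Option (Fin m) =>
          Ideal.Quotient.mk (twistIdeal m fun j => if j = i then a else 0) (X k))) =
      Submodule.span ℤ (Set.range fun k : Fin n =>
        Ideal.Quotient.mk (sqIdeal n) (X k))) : False := by
  have hone : ((a : ℤ) : A4) = 1 := by
    obtain ⟨k, hk⟩ := hodd
    rw [hk]
    push_cast
    rw [A4.two_eq_zero]
    ring
  have hψy : ψ (Ideal.Quotient.mk _ (X none)) ∈
      Submodule.span ℤ (Set.range fun k : Fin n => Ideal.Quotient.mk (sqIdeal n) (X k)) := by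
    rw [← hspan]
    exact ⟨_, Submodule.subset_span ⟨none, rfl⟩, rfl⟩
  obtain ⟨r, hr⟩ := target_sq_two n _ hψy
  have h2 : (Ideal.Quotient.mk (twistIdeal m fun j => if j = i then a else 0) (X none)) ^ 2
      = 2 * ψ.symm r := by
    apply ψ.injective
    rw [map_pow, hr, map_mul, RingEquiv.apply_symm_apply, map_ofNat]
  obtain ⟨p, hp⟩ := Ideal.Quotient.mk_surjective (I := twistIdeal m fun j => if j = i then a else 0)
    (ψ.symm r)
  have hgen : (X none ^ 2 - C a * X (some i) * X none :
      MvPolynomial (Option (Fin m)) ℤ) ∈ twistIdeal m fun j => if j = i then a else 0 := by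
    have h : (X none ^ 2 -
        (∑ j : Fin m, C (if j = i then a else 0) * X (some j)) * X none :
          MvPolynomial (Option (Fin m)) ℤ) ∈ twistIdeal m fun j => if j = i then a else 0 :=
      Ideal.subset_span (Set.mem_union_right _ rfl)
    rw [sum_ite_eq_C] at h
    exact h
  have h3 : Ideal.Quotient.mk (twistIdeal m fun j => if j = i then a else 0)
        (C a * X (some i) * X none)
      = Ideal.Quotient.mk (twistIdeal m fun j => if j = i then a else 0) (X none) ^ 2 := by
    rw [← map_pow, Ideal.Quotient.mk_eq_mk_iff_sub_mem]
    have : (C a * X (some i) * X none - X none ^ 2 :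
        MvPolynomial (Option (Fin m)) ℤ)
        = -(X none ^ 2 - C a * X (some i) * X none) := by ring
    rw [this]
    exact neg_mem hgen
  have hfin : (C a * X (some i) * X none - 2 * p :
      MvPolynomial (Option (Fin m)) ℤ) ∈ twistIdeal m fun j => if j = i then a else 0 := by
    apply Ideal.Quotient.eq_zero_iff_mem.1
    rw [map_sub, h3, h2, map_mul, hp, map_ofNat]
    ring
  have hker : (twistIdeal m fun j => if j = i then a else 0) ≤ RingHom.ker (evalA4 i) := by
    rw [twistIdeal, Ideal.span_le]
    rintro x (⟨j, rfl⟩ | rfl)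
    · show evalA4 i _ = 0
      rw [map_pow, evalA4_X_some]
      by_cases hj : j = i
      · rw [if_pos hj, pow_two, A4.s_sq]
      · rw [if_neg hj]
        ring
    · show evalA4 i _ = 0
      rw [map_sub, map_mul, map_pow, map_sum, evalA4_X_none]
      have hsum : (∑ j : Fin m, evalA4 i (C (if j = i then a else 0) * X (some j)))
          = A4.sEl := by
        rw [Finset.sum_eq_single i]
        · rw [map_mul, evalA4_C, if_pos rfl, hone, one_mul, evalA4_X_some, if_pos rfl]
        · intro j _ hj
          rw [map_mul, evalA4_C, if_neg hj]
          push_cast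
          ring
        · intro h
          simp at h
      rw [hsum, pow_two, A4.t_sq]
      ring
  have hz := hker hfin
  rw [RingHom.mem_ker, map_sub, map_mul, map_mul, evalA4_C, hone, one_mul, evalA4_X_none,
    evalA4_X_some, if_pos rfl, map_mul, map_ofNat, A4.two_eq_zero, zero_mul, sub_zero] at hz
  exact A4.st_ne hz


lemma forward_aux {n : ℕ} (hm : m + 1 = n) (i : Fin m) (b : ℤ) :
    ∃ ψ : (MvPolynomial (Option (Fin m)) ℤ ⧸ twistIdeal m fun j => if j = i then 2 * b else 0) ≃+*
        (MvPolynomial (Fin n) ℤ ⧸ sqIdeal n),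
      Submodule.map ψ.toRingHom.toIntAlgHom.toLinearMap
          (Submodule.span ℤ (Set.range fun k : Option (Fin m) =>
            Ideal.Quotient.mk (twistIdeal m fun j => if j = i then 2 * b else 0) (X k))) =
        Submodule.span ℤ (Set.range fun k : Fin n =>
          Ideal.Quotient.mk (sqIdeal n) (X k)) := by
  let e : Option (Fin m) ≃ Fin n := (_root_.finSuccEquiv m).symm.trans (finCongr hm)
  let ψ₁ := Ideal.quotientEquiv (twistIdeal m fun j => if j = i then 2 * b else 0)
    (sqOpt m) (shiftEquiv i b).toRingEquiv (map_twist_eq_sqOpt i b).symm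
  let ψ₂ := Ideal.quotientEquiv (sqOpt m) (sqIdeal n)
    (renameEquiv ℤ e).toRingEquiv (map_sqOpt_eq e).symm
  refine ⟨ψ₁.trans ψ₂, ?_⟩
  have happ : ∀ x, (ψ₁.trans ψ₂) (Ideal.Quotient.mk _ x)
      = Ideal.Quotient.mk (sqIdeal n) (rename e (shiftEquiv i b x)) := by
    intro x
    rw [RingEquiv.trans_apply]
    show ψ₂ (ψ₁ _) = _
    show ψ₂ (Ideal.Quotient.mk (sqOpt m) (shiftEquiv i b x)) = _
    rfl
  have hsm : ∀ (c : ℤ) (l : Fin n),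
      Ideal.Quotient.mk (sqIdeal n) (C c * X l)
        = c • Ideal.Quotient.mk (sqIdeal n) (X l) := by
    intro c l
    rw [map_mul, show (C c : MvPolynomial (Fin n) ℤ) = (c : MvPolynomial (Fin n) ℤ) from
      eq_intCast C c, map_intCast, ← zsmul_eq_mul]
  have hL : ∀ x, (ψ₁.trans ψ₂).toRingHom.toIntAlgHom.toLinearMap x = (ψ₁.trans ψ₂) x :=
    fun _ => rfl
  rw [Submodule.map_span]
  apply le_antisymm
  · rw [Submodule.span_le]
    rintro _ ⟨_, ⟨k, rfl⟩, rfl⟩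
    show (ψ₁.trans ψ₂) (Ideal.Quotient.mk _ (X k)) ∈ _
    cases k with
    | some j =>
      rw [happ, shiftEquiv_X_some, rename_X]
      exact Submodule.subset_span ⟨e (some j), rfl⟩
    | none =>
      rw [happ, shiftEquiv_X_none, map_add, map_mul, rename_X, rename_X, rename_C,
        map_add, hsm]
      exact add_mem (Submodule.subset_span ⟨e none, rfl⟩)
        (Submodule.smul_mem _ _ (Submodule.subset_span ⟨e (some i), rfl⟩))
  · rw [Submodule.span_le]
    rintro _ ⟨l, rfl⟩
    obtain ⟨k, rfl⟩ := e.surjective l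
    show Ideal.Quotient.mk (sqIdeal n) (X (e k)) ∈ _
    cases k with
    | some j =>
      refine Submodule.subset_span ⟨_, ⟨some j, rfl⟩, ?_⟩
      rw [hL, happ, shiftEquiv_X_some, rename_X]
    | none =>
      have h1 : Ideal.Quotient.mk (sqIdeal n) (X (e none))
          = (ψ₁.trans ψ₂) (Ideal.Quotient.mk _ (X none))
            - b • (ψ₁.trans ψ₂) (Ideal.Quotient.mk _ (X (some i))) := by
        rw [happ, happ, shiftEquiv_X_none, shiftEquiv_X_some, map_add, map_mul,
          rename_X, rename_X, rename_C, map_add, hsm]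
        abel
      rw [h1]
      exact sub_mem (Submodule.subset_span ⟨_, ⟨none, rfl⟩, rfl⟩)
        (Submodule.smul_mem _ _ (Submodule.subset_span ⟨_, ⟨some i, rfl⟩, rfl⟩))

end Helpers




/-- For `α = a · x_i`, the ring `R(α)` is isomorphic as a graded ring (a ring isomorphism
carrying the ℤ-span of the degree-two generators onto the ℤ-span of the degree-two
generators) to `ℤ[z₁,…,z_n]/⟨z₁²,…,z_n²⟩` iff `a` is even. -/
theorem stmt16 (n : ℕ) (hn : 2 ≤ n) (i : Fin (n - 1)) (a : ℤ) :
    (∃ ψ : (MvPolynomial (Option (Fin (n - 1))) ℤ ⧸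
          twistIdeal (n - 1) fun j => if j = i then a else 0) ≃+*
        (MvPolynomial (Fin n) ℤ ⧸ sqIdeal n),
      Submodule.map ψ.toRingHom.toIntAlgHom.toLinearMap
          (Submodule.span ℤ (Set.range fun k : Option (Fin (n - 1)) =>
            Ideal.Quotient.mk (twistIdeal (n - 1) fun j => if j = i then a else 0) (X k))) =
        Submodule.span ℤ (Set.range fun k : Fin n =>
          Ideal.Quotient.mk (sqIdeal n) (X k))) ↔ Even a := by
  constructor
  · rintro ⟨ψ, hspan⟩
    by_contra hodd
    rw [Int.not_even_iff_odd] at hodd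
    exact backward_aux i a hodd ψ hspan
  · intro ha
    obtain ⟨b, rfl⟩ := ha
    rw [show b + b = 2 * b from (two_mul b).symm]
    exact forward_aux (by omega) i b
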